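/- Let k be an algebraically closed field of characteristic 2, V a finite-dimensional symplectic k-vector space of dimension 2r, and Q a quadratic form on V whose associated endomorphism A = A_Q (defined by Q(x+y)−Q(x)−Q(y) = (Ax,y)) is nilpotent. Then there exists a basis (e_i) of V indexed by the odd integers i with −2r+1 ≤ i ≤ 2r−1, satisfying (e_i, e_j) = δ_{i+j,0}, such that A e_i lies in the span of {e_j : j > i} for every index i, and Q(e_i) = 0 for all i ≥ 0. -/

import Mathlib

open Module LinearMap Submodule

/-- The index set `H_r` of odd integers `i` with `-2r+1 ≤ i ≤ 2r-1`. -/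
def Hr (r : ℕ) : Type := {i : ℤ // Odd i ∧ -(2 * (r : ℤ)) + 1 ≤ i ∧ i ≤ 2 * (r : ℤ) - 1}

section Helpers
universe u v
variable {k : Type u} [Field k] {V : Type v} [AddCommGroup V] [Module k V]

lemma char2_add_self [CharP k 2] (a : k) : a + a = 0 := by
  have h2 : (2 : k) = 0 := by exact_mod_cast CharP.cast_eq_zero k 2
  calc a + a = (2 : k) * a := by ring
    _ = 0 := by rw [h2, zero_mul]

lemma char2_neg [CharP k 2] (a : k) : -a = a := by
  rw [neg_eq_iff_add_eq_zero]; exact char2_add_self a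

lemma char2_vadd_self (k : Type u) [Field k] [CharP k 2] {V : Type v} [AddCommGroup V]
    [Module k V] (x : V) : x + x = 0 := by
  have h : x + x = (2 : k) • x := (two_smul k x).symm
  rw [h, show (2 : k) = 0 by exact_mod_cast CharP.cast_eq_zero k 2, zero_smul]

lemma char2_bsymm [CharP k 2] {B : LinearMap.BilinForm k V} (halt : B.IsAlt) (x y : V) :
    B x y = B y x := by
  rw [← halt.neg_eq x y, char2_neg]

lemma li_hyperbolic {B : LinearMap.BilinForm k V} (halt : B.IsAlt) {u w : V}
    (huw : B u w = 1) : LinearIndependent k ![u, w] := by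
  rw [linearIndependent_fin2]
  constructor
  · intro h
    simp only [Matrix.cons_val_one, Matrix.head_cons, Matrix.cons_val_zero] at h
    rw [h] at huw
    simp at huw
  · intro a h
    simp only [Matrix.cons_val_one, Matrix.head_cons, Matrix.cons_val_zero] at h
    have h2 := congrArg (fun x => B x w) h
    simp only [map_smul, LinearMap.smul_apply, halt.self_eq_zero, smul_eq_mul, mul_zero] at h2
    rw [huw] at h2
    exact one_ne_zero h2.symm

lemma range_pair (u w : V) : Set.range ![u, w] = {u, w} := by
  ext x
  constructor
  · rintro ⟨i, rfl⟩
    fin_cases i <;> simp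
  · rintro (rfl | rfl)
    exacts [⟨0, rfl⟩, ⟨1, rfl⟩]

lemma finrank_span_hyperbolic {B : LinearMap.BilinForm k V} (halt : B.IsAlt) {u w : V}
    (huw : B u w = 1) : finrank k (span k ({u, w} : Set V)) = 2 := by
  rw [← range_pair u w, finrank_span_eq_card (li_hyperbolic halt huw)]
  simp

lemma restrict_span_hyperbolic_nondeg {B : LinearMap.BilinForm k V} (halt : B.IsAlt) {u w : V}
    (huw : B u w = 1) : (B.restrict (span k ({u, w} : Set V))).Nondegenerate := by
  have hR : LinearMap.IsRefl (B.restrict (span k ({u, w} : Set V))) :=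
    fun x y h => halt.isRefl x y h
  refine hR.nondegenerate_iff_separatingLeft.mpr ?_
  intro m hm
  obtain ⟨a, b, hab⟩ := Submodule.mem_span_pair.mp m.2
  have h1 : B (m : V) w = a := by
    rw [← hab]
    simp [map_smul, huw, halt.self_eq_zero]
  have h2 : B (m : V) u = -b := by
    rw [← hab]
    have hwu : B w u = -1 := by rw [← halt.neg_eq, huw]
    simp [map_smul, hwu, halt.self_eq_zero]
  have hw : B (m : V) w = 0 := hm ⟨w, Submodule.subset_span (by simp)⟩
  have hu : B (m : V) u = 0 := hm ⟨u, Submodule.subset_span (by simp)⟩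
  have ha : a = 0 := by rw [← h1, hw]
  have hb : b = 0 := by have := h2.symm.trans hu; simpa using this
  ext
  rw [← hab, ha, hb]
  simp

lemma restrict_orthogonal_nondeg [FiniteDimensional k V] {B : LinearMap.BilinForm k V}
    (hrefl : B.IsRefl) (hnd : B.Nondegenerate) {P : Submodule k V}
    (hco : IsCompl P (B.orthogonal P)) : (B.restrict (B.orthogonal P)).Nondegenerate := by
  have hR : LinearMap.IsRefl (B.restrict (B.orthogonal P)) := fun x y h => hrefl x y h
  refine hR.nondegenerate_iff_separatingLeft.mpr ?_
  intro m hm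
  have hmV : ∀ y : V, B (m : V) y = 0 := by
    intro y
    have hy : y ∈ P ⊔ B.orthogonal P := by rw [hco.sup_eq_top]; trivial
    obtain ⟨p, hp, q, hq, rfl⟩ := Submodule.mem_sup.mp hy
    have h1 : B (m : V) p = 0 := hrefl p m (m.2 p hp)
    have h2 : B (m : V) q = 0 := hm ⟨q, hq⟩
    rw [map_add, h1, h2, add_zero]
  ext
  exact hnd.1 _ hmV

lemma even_finrank_of_alt_nondeg :
    ∀ (n : ℕ) (V : Type v) [AddCommGroup V] [Module k V] [FiniteDimensional k V],
      finrank k V = n → ∀ B : LinearMap.BilinForm k V, B.IsAlt → B.Nondegenerate →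
      Even n := by
  intro n
  induction n using Nat.strong_induction_on with
  | _ n ih =>
    intro V _ _ _ hdim B halt hnd
    rcases Nat.eq_zero_or_pos n with h0 | hpos
    · simp [h0]
    · have : Nontrivial V := by
        rw [← finrank_pos_iff (R := k)]; omega
      obtain ⟨u, hu⟩ := exists_ne (0 : V)
      have hne : ¬ ∀ y, B u y = 0 := fun h => hu (hnd.1 u h)
      push_neg at hne
      obtain ⟨w0, hw0⟩ := hne
      set w := (B u w0)⁻¹ • w0 with hw
      have huw : B u w = 1 := by
        rw [hw, map_smul, smul_eq_mul, inv_mul_cancel₀ hw0]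
      set P := span k ({u, w} : Set V) with hP
      have hPnd : (B.restrict P).Nondegenerate := restrict_span_hyperbolic_nondeg halt huw
      have hco : IsCompl P (B.orthogonal P) :=
        LinearMap.BilinForm.isCompl_orthogonal_of_restrict_nondegenerate halt.isRefl hPnd
      set W := B.orthogonal P with hWdef
      have hWnd : (B.restrict W).Nondegenerate := restrict_orthogonal_nondeg halt.isRefl hnd hco
      have hWalt : (B.restrict W).IsAlt := fun x => halt x
      have hrank : finrank k W = n - 2 := by
        rw [hWdef, LinearMap.BilinForm.finrank_orthogonal hnd,
          finrank_span_hyperbolic halt huw, hdim]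
      have hn2 : 2 ≤ n := by
        have h := Submodule.finrank_add_eq_of_isCompl hco
        rw [finrank_span_hyperbolic halt huw, hdim] at h
        omega
      have hev : Even (n - 2) := ih (n - 2) (by omega) W hrank _ hWalt hWnd
      obtain ⟨m, hm⟩ := hev
      exact ⟨m + 1, by omega⟩

end Helpers

universe u v

theorem aux_main (k : Type u) [Field k] [IsAlgClosed k] [CharP k 2] :
    ∀ (r : ℕ) (V : Type v) [AddCommGroup V] [Module k V] [FiniteDimensional k V],
      finrank k V = 2 * r →
      ∀ (B : LinearMap.BilinForm k V), B.IsAlt → B.Nondegenerate →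
      ∀ (Q : QuadraticForm k V) (A : Module.End k V),
        (∀ x y : V, Q (x + y) - Q x - Q y = B (A x) y) → IsNilpotent A →
      ∃ e : Basis (Hr r) k V,
        (∀ i j : Hr r, B (e i) (e j) = if i.1 + j.1 = 0 then 1 else 0) ∧
        (∀ i : Hr r, A (e i) ∈ Submodule.span k {v : V | ∃ j : Hr r, i.1 < j.1 ∧ e j = v}) ∧
        (∀ i : Hr r, 0 ≤ i.1 → Q (e i) = 0) := by
  intro r
  induction r with
  | zero =>
    intro V _ _ _ hdim B halt hnd Q A hA hnil
    have hemp : IsEmpty (Hr 0) := by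
      constructor
      rintro ⟨i, ⟨m, hm⟩, h1, h2⟩
      simp only [Nat.cast_zero, mul_zero] at h1 h2
      omega
    have hsub : Subsingleton V := by
      rw [← finrank_zero_iff (R := k)]
      omega
    exact ⟨Basis.empty V, fun i => hemp.false i |>.elim, fun i => hemp.false i |>.elim,
      fun i => hemp.false i |>.elim⟩
  | succ r ih =>
    intro V _ _ _ hdim B halt hnd Q A hA hnil
    have hrefl := halt.isRefl
    have Bsymm : ∀ x y : V, B x y = B y x := char2_bsymm halt
    have hBAxx : ∀ x : V, B (A x) x = 0 := by
      intro x
      have h := hA x x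
      rw [char2_vadd_self k x, QuadraticMap.map_zero, sub_sub, char2_add_self, sub_zero] at h
      exact h.symm
    have Csymm : ∀ x y : V, B (A x) y = B (A y) x := by
      intro x y
      have h1 := hA x y
      have h2 := hA y x
      rw [add_comm y x] at h2
      rw [← h1, ← h2]
      ring
    -- ker A is nontrivial
    have hV2 : finrank k V = 2 * r + 2 := by omega
    have hVnt : Nontrivial V := by rw [← finrank_pos_iff (R := k)]; omega
    obtain ⟨n, hn⟩ := hnil
    have hkerne : LinearMap.ker A ≠ ⊥ := by
      intro hbot
      have hinj : Function.Injective A := by rwa [← LinearMap.ker_eq_bot]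
      have hinjn : ∀ m : ℕ, Function.Injective ⇑(A ^ m) := by
        intro m
        induction m with
        | zero =>
          rw [pow_zero, Module.End.one_eq_id, LinearMap.id_coe]; exact Function.injective_id
        | succ m ihm =>
          intro x y hxy
          rw [pow_succ, Module.End.mul_apply, Module.End.mul_apply] at hxy
          exact hinj (ihm hxy)
      obtain ⟨x0, hx0⟩ := exists_ne (0 : V)
      have h0 : (A ^ n) x0 = (A ^ n) 0 := by rw [hn]; simp
      exact hx0 (hinjn n h0)
    -- finrank of ker A is even, hence at least 2
    obtain ⟨W₀, hW₀⟩ := Submodule.exists_isCompl (LinearMap.ker A)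
    set C : LinearMap.BilinForm k V := B ∘ₗ (A : V →ₗ[k] V) with hC
    have hCW₀ : (C.restrict W₀).Nondegenerate := by
      have hR : LinearMap.IsRefl (C.restrict W₀) := fun x y h => (Csymm (y : V) (x : V)).trans h
      refine hR.nondegenerate_iff_separatingLeft.mpr ?_
      intro m hm
      have hAm : ∀ y : V, B (A (m : V)) y = 0 := by
        intro y
        have hy : y ∈ LinearMap.ker A ⊔ W₀ := by rw [hW₀.sup_eq_top]; trivial
        obtain ⟨p, hp, q, hq, rfl⟩ := Submodule.mem_sup.mp hy
        have h1 : B (A (m : V)) p = 0 := by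
          rw [Csymm, LinearMap.mem_ker.mp hp]
          simp
        have h2 : B (A (m : V)) q = 0 := hm ⟨q, hq⟩
        rw [map_add, h1, h2, add_zero]
      have hker : A (m : V) = 0 := hnd.1 _ hAm
      have hmk : (m : V) ∈ LinearMap.ker A ⊓ W₀ := ⟨hker, m.2⟩
      rw [hW₀.inf_eq_bot] at hmk
      exact Subtype.ext hmk
    have hCW₀alt : (C.restrict W₀).IsAlt := fun x => hBAxx (x : V)
    have hW₀even : Even (finrank k W₀) :=
      even_finrank_of_alt_nondeg (finrank k W₀) W₀ rfl _ hCW₀alt hCW₀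
    obtain ⟨x₀, hx₀mem, hx₀ne⟩ := (Submodule.ne_bot_iff _).mp hkerne
    have hkerpos : 0 < finrank k (LinearMap.ker A) := by
      have : Nontrivial (LinearMap.ker A) :=
        nontrivial_of_ne ⟨x₀, hx₀mem⟩ 0 (fun h => hx₀ne (congrArg Subtype.val h))
      rw [finrank_pos_iff (R := k)]
      exact this
    have hkertot := Submodule.finrank_add_eq_of_isCompl hW₀
    have hker2 : 2 ≤ finrank k (LinearMap.ker A) := by
      obtain ⟨m, hm⟩ := hW₀even
      omega
    -- find e₊
    have hQadd : ∀ x y : V, x ∈ LinearMap.ker A → Q (x + y) = Q x + Q y := by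
      intro x y hx
      have h := hA x y
      rw [LinearMap.mem_ker.mp hx] at h
      simp only [map_zero, LinearMap.zero_apply] at h
      rw [sub_sub, sub_eq_zero] at h
      exact h
    obtain ⟨ep, hepker, hepQ, hepne⟩ :
        ∃ e : V, e ∈ LinearMap.ker A ∧ Q e = 0 ∧ e ≠ 0 := by
      by_cases hq : Q x₀ = 0
      · exact ⟨x₀, hx₀mem, hq, hx₀ne⟩
      · have hnotle : ¬ (LinearMap.ker A ≤ span k {x₀}) := by
          intro hle
          have h1 := Submodule.finrank_mono hle
          rw [finrank_span_singleton hx₀ne] at h1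
          omega
        obtain ⟨y, hyker, hyns⟩ := SetLike.not_le_iff_exists.mp hnotle
        obtain ⟨lam, hlam⟩ := IsAlgClosed.exists_pow_nat_eq (Q y / Q x₀) (n := 2) (by norm_num)
        refine ⟨y + lam • x₀, add_mem hyker (smul_mem _ _ hx₀mem), ?_, ?_⟩
        · rw [hQadd y (lam • x₀) hyker, QuadraticMap.map_smul, smul_eq_mul,
            show lam * lam = lam ^ 2 by ring, hlam, div_mul_cancel₀ _ hq]
          exact char2_add_self _
        · intro h0
          apply hyns
          have hy : y = -(lam • x₀) := by
            rw [eq_neg_iff_add_eq_zero]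
            exact h0
          rw [hy]
          exact Submodule.neg_mem _
            (Submodule.smul_mem _ _ (Submodule.mem_span_singleton_self x₀))
    have hAep : A ep = 0 := LinearMap.mem_ker.mp hepker
    -- find e₋
    have hne : ¬ ∀ y, B ep y = 0 := fun h => hepne (hnd.1 ep h)
    push_neg at hne
    obtain ⟨w0, hw0⟩ := hne
    set em := (B ep w0)⁻¹ • w0 with hem
    have hB1 : B ep em = 1 := by rw [hem, map_smul, smul_eq_mul, inv_mul_cancel₀ hw0]
    have hBme : B em ep = 1 := by rw [Bsymm em ep, hB1]
    set P := span k ({ep, em} : Set V) with hPdef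
    have hepP : ep ∈ P := Submodule.subset_span (Set.mem_insert _ _)
    have hemP : em ∈ P := Submodule.subset_span (Set.mem_insert_of_mem _ rfl)
    have hPnd := restrict_span_hyperbolic_nondeg halt hB1
    have hco : IsCompl P (B.orthogonal P) :=
      LinearMap.BilinForm.isCompl_orthogonal_of_restrict_nondegenerate hrefl hPnd
    set W := B.orthogonal P with hWdef
    have hWmem : ∀ (x : V), x ∈ W → ∀ p ∈ P, B p x = 0 := fun x hx p hp => hx p hp
    have hWnd := restrict_orthogonal_nondeg hrefl hnd hco
    have hWalt : (B.restrict W).IsAlt := fun x => halt (x : V)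
    have hfP : finrank k P = 2 := finrank_span_hyperbolic halt hB1
    have hfW : finrank k W = 2 * r := by
      rw [hWdef, LinearMap.BilinForm.finrank_orthogonal hnd, hfP, hdim]
      omega
    -- key decomposition
    have hkey : ∀ v : V, A v - (B (A v) em) • ep ∈ W := by
      intro v
      intro p hp
      obtain ⟨a, b, rfl⟩ := Submodule.mem_span_pair.mp hp
      have h1 : B ep (A v) = 0 := by
        rw [Bsymm ep (A v), Csymm, hAep]
        simp
      show B (a • ep + b • em) (A v - B (A v) em • ep) = 0
      have expand : B (a • ep + b • em) (A v - B (A v) em • ep)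
          = a * (B ep (A v) - B (A v) em * B ep ep)
            + b * (B em (A v) - B (A v) em * B em ep) := by
        simp only [map_add, map_sub, map_smul, LinearMap.add_apply, LinearMap.sub_apply,
          LinearMap.smul_apply, smul_eq_mul]
        ring
      rw [expand, h1, halt.self_eq_zero, hBme, Bsymm em (A v)]
      ring
    -- the endomorphism on W
    set f : W →ₗ[k] V :=
      (A ∘ₗ W.subtype) - ((LinearMap.flip B em) ∘ₗ (A ∘ₗ W.subtype)).smulRight ep with hfdef
    have hfapply : ∀ w : W, f w = A (w : V) - (B (A (w : V)) em) • ep := fun w => rfl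
    set AW : Module.End k W := LinearMap.codRestrict W f (fun w => hkey (w : V)) with hAWdef
    have hAWapply : ∀ w : W, (AW w : V) = A (w : V) - (B (A (w : V)) em) • ep :=
      fun w => rfl
    set QW : QuadraticForm k W := Q.comp W.subtype with hQWdef
    have hQWapply : ∀ w : W, QW w = Q (w : V) := fun w => rfl
    have hAW : ∀ x y : W, QW (x + y) - QW x - QW y = (B.restrict W) (AW x) y := by
      intro x y
      have hy : B ep (y : V) = 0 := hWmem (y : V) y.2 ep hepP
      have step : B (A (x : V) - (B (A (x : V)) em) • ep) (y : V) = B (A (x : V)) (y : V) := by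
        rw [map_sub, map_smul]
        simp only [LinearMap.sub_apply, LinearMap.smul_apply, smul_eq_mul, hy, mul_zero, sub_zero]
      calc QW (x + y) - QW x - QW y = Q ((x : V) + (y : V)) - Q (x : V) - Q (y : V) := rfl
        _ = B (A (x : V)) (y : V) := hA _ _
        _ = B (A (x : V) - (B (A (x : V)) em) • ep) (y : V) := step.symm
        _ = (B.restrict W) (AW x) y := rfl
    have hAWnil : IsNilpotent AW := by
      refine ⟨n, ?_⟩
      have key : ∀ (m : ℕ) (x : W), ∃ c : k, ((AW ^ m) x : V) = (A ^ m) (x : V) + c • ep := by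
        intro m
        induction m with
        | zero => exact fun x => ⟨0, by simp⟩
        | succ m ihm =>
          intro x
          obtain ⟨c, hc⟩ := ihm x
          refine ⟨- B (A (((AW ^ m) x : W) : V)) em, ?_⟩
          have h1 : (((AW ^ (m + 1)) x : W) : V)
              = A (((AW ^ m) x : W) : V) - (B (A (((AW ^ m) x : W) : V)) em) • ep := by
            rw [pow_succ', Module.End.mul_apply, hAWapply]
          rw [h1]
          have h2 : A (((AW ^ m) x : W) : V) = (A ^ (m + 1)) (x : V) := by
            rw [hc, map_add, map_smul, hAep, smul_zero, add_zero, ← Module.End.mul_apply,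
              ← pow_succ']
          rw [h2, neg_smul, sub_eq_add_neg]
      apply LinearMap.ext
      intro x
      obtain ⟨c, hc⟩ := key n x
      rw [hn] at hc
      simp only [LinearMap.zero_apply, zero_add] at hc
      have hmemW : (((AW ^ n) x : W) : V) ∈ W := ((AW ^ n) x).2
      rw [hc] at hmemW
      have hc0 : B em (c • ep) = 0 := hWmem _ hmemW em hemP
      rw [map_smul, smul_eq_mul, hBme, mul_one] at hc0
      have : (((AW ^ n) x : W) : V) = 0 := by rw [hc, hc0, zero_smul]
      exact Subtype.ext this
    obtain ⟨eb, heb1, heb2, heb3⟩ := ih W hfW (B.restrict W) hWalt hWnd QW AW hAW hAWnil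
    -- index bookkeeping
    have hrcast : ((r + 1 : ℕ) : ℤ) = (r : ℤ) + 1 := by push_cast; ring
    let top : Hr (r + 1) := ⟨2 * (r : ℤ) + 1,
      ⟨⟨r, by ring⟩, by rw [hrcast]; omega, by rw [hrcast]; omega⟩⟩
    let bot : Hr (r + 1) := ⟨-(2 * (r : ℤ) + 1),
      ⟨⟨-(r + 1), by ring⟩, by rw [hrcast]; omega, by rw [hrcast]; omega⟩⟩
    let emb : Hr r → Hr (r + 1) := fun j =>
      ⟨j.1, j.2.1, by have h1 := j.2.2.1; rw [hrcast]; omega,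
        by have h2 := j.2.2.2; rw [hrcast]; omega⟩
    let ee : Bool ⊕ Hr r → Hr (r + 1) := Sum.elim (fun b => cond b top bot) emb
    have heetop : ee (Sum.inl true) = top := rfl
    have heebot : ee (Sum.inl false) = bot := rfl
    have heej : ∀ j, ee (Sum.inr j) = emb j := fun _ => rfl
    have htopval : (top : Hr (r + 1)).1 = 2 * (r : ℤ) + 1 := rfl
    have hbotval : (bot : Hr (r + 1)).1 = -(2 * (r : ℤ) + 1) := rfl
    have hembval : ∀ j, (emb j).1 = j.1 := fun _ => rfl
    have hee_inj : Function.Injective ee := by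
      intro s t h
      have hv := congrArg Subtype.val h
      rcases s with b | js <;> rcases t with b' | jt
      · cases b <;> cases b' <;>
          simp only [ee, Sum.elim_inl, cond_true, cond_false, htopval, hbotval] at hv <;>
          first
          | rfl
          | exact absurd hv (by omega)
      · obtain ⟨_, hlo, hhi⟩ := jt.2
        cases b <;>
          simp only [ee, Sum.elim_inl, Sum.elim_inr, cond_true, cond_false, htopval, hbotval,
            hembval] at hv <;>
          exact absurd hv (by omega)
      · obtain ⟨_, hlo, hhi⟩ := js.2
        cases b' <;>
          simp only [ee, Sum.elim_inl, Sum.elim_inr, cond_true, cond_false, htopval, hbotval,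
            hembval] at hv <;>
          exact absurd hv (by omega)
      · simp only [ee, Sum.elim_inr] at hv
        have hv' : js.1 = jt.1 := hv
        exact congrArg Sum.inr (Subtype.ext hv')
    have hee_surj : Function.Surjective ee := by
      intro x
      obtain ⟨hodd, hlo, hhi⟩ := x.2
      push_cast at hlo hhi
      by_cases h1 : x.1 = 2 * (r : ℤ) + 1
      · exact ⟨Sum.inl true, Subtype.ext ((congrArg Subtype.val heetop).trans
          (htopval.trans h1.symm))⟩
      · by_cases h2 : x.1 = -(2 * (r : ℤ) + 1)
        · exact ⟨Sum.inl false, Subtype.ext ((congrArg Subtype.val heebot).trans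
            (hbotval.trans h2.symm))⟩
        · obtain ⟨m, hm⟩ := hodd
          exact ⟨Sum.inr ⟨x.1, x.2.1, by omega, by omega⟩, Subtype.ext rfl⟩
    let σ : (Bool ⊕ Hr r) ≃ Hr (r + 1) := Equiv.ofBijective ee ⟨hee_inj, hee_surj⟩
    -- basis of P
    have hPli : LinearIndependent k ![(⟨ep, hepP⟩ : P), ⟨em, hemP⟩] := by
      apply LinearIndependent.of_comp P.subtype
      have hcomp : (P.subtype ∘ ![(⟨ep, hepP⟩ : P), ⟨em, hemP⟩]) = ![ep, em] := by
        funext i; fin_cases i <;> rfl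
      rw [hcomp]
      exact li_hyperbolic halt hB1
    let bvec : Bool → P := fun b => cond b ⟨ep, hepP⟩ ⟨em, hemP⟩
    have hPliB : LinearIndependent k bvec := by
      have h1 := hPli.comp (fun b : Bool => cond b 0 1) (by decide)
      have h2 : (![(⟨ep, hepP⟩ : P), ⟨em, hemP⟩] ∘ fun b : Bool => cond b (0 : Fin 2) 1)
          = bvec := by
        funext b; cases b <;> rfl
      rwa [h2] at h1
    let bP : Basis Bool k P := basisOfLinearIndependentOfCardEqFinrank hPliB (by simp [hfP])
    have hbP : ∀ b, bP b = bvec b := fun b =>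
      congrFun (coe_basisOfLinearIndependentOfCardEqFinrank hPliB (by simp [hfP])) b
    let e : Basis (Hr (r + 1)) k V :=
      ((bP.prod eb).map (Submodule.prodEquivOfIsCompl P W hco)).reindex σ
    have hval : ∀ s, e (σ s) =
        Sum.elim (fun b : Bool => cond b ep em) (fun j => ((eb j : W) : V)) s := by
      intro s
      show ((bP.prod eb).map (Submodule.prodEquivOfIsCompl P W hco)).reindex σ (σ s) = _
      rw [Basis.reindex_apply, Equiv.symm_apply_apply, Basis.map_apply, Basis.prod_apply]
      rcases s with b | j
      · simp only [Sum.elim_inl, Function.comp_apply, LinearMap.inl_apply,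
          Submodule.coe_prodEquivOfIsCompl', hbP]
        cases b <;> simp [bvec]
      · simp only [Sum.elim_inr, Function.comp_apply, LinearMap.inr_apply,
          Submodule.coe_prodEquivOfIsCompl']
        simp
    have hvtop : e top = ep := hval (Sum.inl true)
    have hvbot : e bot = em := hval (Sum.inl false)
    have hvemb : ∀ j, e (emb j) = ((eb j : W) : V) := fun j => hval (Sum.inr j)
    refine ⟨e, ?_, ?_, ?_⟩
    · -- good basis
      intro i j
      obtain ⟨s, rfl⟩ : ∃ s, σ s = i := ⟨σ.symm i, σ.apply_symm_apply i⟩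
      obtain ⟨t, rfl⟩ : ∃ t, σ t = j := ⟨σ.symm j, σ.apply_symm_apply j⟩
      rw [show σ s = ee s from rfl, show σ t = ee t from rfl]
      rcases s with b | js <;> rcases t with b' | jt
      · cases b <;> cases b'
        · rw [heebot, hvbot, halt.self_eq_zero, hbotval, if_neg (by omega)]
        · rw [heebot, heetop, hvbot, hvtop, hBme, hbotval, htopval, if_pos (by omega)]
        · rw [heetop, heebot, hvbot, hvtop, hB1, hbotval, htopval, if_pos (by omega)]
        · rw [heetop, hvtop, halt.self_eq_zero, htopval, if_neg (by omega)]
      · obtain ⟨_, hlo, hhi⟩ := jt.2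
        have hB0 : ∀ p ∈ P, B p ((eb jt : W) : V) = 0 := hWmem _ (eb jt).2
        rw [heej jt, hvemb jt, hembval jt]
        cases b
        · rw [heebot, hvbot, hB0 em hemP, hbotval, if_neg (by omega)]
        · rw [heetop, hvtop, hB0 ep hepP, htopval, if_neg (by omega)]
      · obtain ⟨_, hlo, hhi⟩ := js.2
        have hB0 : ∀ p ∈ P, B p ((eb js : W) : V) = 0 := hWmem _ (eb js).2
        rw [heej js, hvemb js, hembval js]
        cases b'
        · rw [heebot, hvbot, Bsymm, hB0 em hemP, hbotval, if_neg (by omega)]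
        · rw [heetop, hvtop, Bsymm, hB0 ep hepP, htopval, if_neg (by omega)]
      · rw [heej js, heej jt, hvemb js, hvemb jt, hembval js, hembval jt]
        exact heb1 js jt
    · -- triangularity
      intro i
      obtain ⟨s, rfl⟩ : ∃ s, σ s = i := ⟨σ.symm i, σ.apply_symm_apply i⟩
      rw [show σ s = ee s from rfl]
      have hWle : ∀ (c : ℤ), c < -(2 * (r : ℤ)) + 1 →
          W ≤ span k {v : V | ∃ j : Hr (r + 1), c < j.1 ∧ e j = v} := by
        intro c hc w hw
        have h1 : (⟨w, hw⟩ : W) ∈ span k (Set.range eb) := by rw [eb.span_eq]; trivial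
        have h2 : w ∈ Submodule.map W.subtype (span k (Set.range eb)) :=
          ⟨⟨w, hw⟩, h1, rfl⟩
        rw [Submodule.map_span] at h2
        refine Submodule.span_le.mpr ?_ h2
        rintro v ⟨_, ⟨j, rfl⟩, rfl⟩
        have hj := j.2.2.1
        refine Submodule.subset_span ⟨emb j, ?_, hvemb j⟩
        rw [hembval]
        omega
      have heptop : ∀ (c : ℤ), c < 2 * (r : ℤ) + 1 →
          ep ∈ span k {v : V | ∃ j : Hr (r + 1), c < j.1 ∧ e j = v} := by
        intro c hc
        refine Submodule.subset_span ⟨top, ?_, hvtop⟩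
        rw [htopval]
        exact hc
      rcases s with b | js
      · cases b
        · -- e₋ : index -(2r+1)
          rw [heebot, hvbot]
          simp only [hbotval]
          have hdc : A em = (A em - (B (A em) em) • ep) + (B (A em) em) • ep := by abel
          rw [hdc]
          refine Submodule.add_mem _ ?_ ?_
          · exact hWle _ (by omega) (hkey em)
          · exact Submodule.smul_mem _ _ (heptop _ (by omega))
        · rw [heetop, hvtop, hAep]
          exact Submodule.zero_mem _
      · rw [heej js, hvemb js]
        simp only [hembval]
        obtain ⟨_, hlo, hhi⟩ := js.2
        have hdc : A ((eb js : W) : V)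
            = ((AW (eb js) : W) : V) + (B (A ((eb js : W) : V)) em) • ep := by
          rw [hAWapply]
          abel
        rw [hdc]
        refine Submodule.add_mem _ ?_ ?_
        · have h2 := heb2 js
          have h3 : ((AW (eb js) : W) : V) ∈ Submodule.map W.subtype
              (span k {w : W | ∃ l : Hr r, js.1 < l.1 ∧ eb l = w}) :=
            ⟨AW (eb js), h2, rfl⟩
          rw [Submodule.map_span] at h3
          refine Submodule.span_le.mpr ?_ h3
          rintro v ⟨_, ⟨l, hl, rfl⟩, rfl⟩
          refine Submodule.subset_span ⟨emb l, ?_, hvemb l⟩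
          rw [hembval]
          exact hl
        · refine Submodule.smul_mem _ _ (heptop _ ?_)
          omega
    · -- vanishing of Q
      intro i hi
      obtain ⟨s, rfl⟩ : ∃ s, σ s = i := ⟨σ.symm i, σ.apply_symm_apply i⟩
      rw [show σ s = ee s from rfl] at hi ⊢
      rcases s with b | js
      · cases b
        · exfalso
          rw [heebot, hbotval] at hi
          omega
        · rw [heetop, hvtop]
          exact hepQ
      · rw [heej js, hvemb js]
        rw [heej js, hembval js] at hi
        exact heb3 js hi

/-- char 2, `V` a `2r`-dimensional symplectic space, `Q` a quadratic
form whose associated endomorphism `A` (with `Q(x+y) - Qx - Qy = B(Ax, y)`) is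
nilpotent.  Then there is a good basis `(e_i)_{i ∈ H_r}` (i.e. `(e_i,e_j) = δ_{i+j,0}`)
such that `A e_i ∈ span{e_j : j > i}` for all `i`, and `Q e_i = 0` for `i ≥ 0`. -/
theorem exists_good_basis_nilpotent
    (k V : Type*) [Field k] [IsAlgClosed k] [CharP k 2] [AddCommGroup V] [Module k V]
    [FiniteDimensional k V] (r : ℕ) (hdim : Module.finrank k V = 2 * r)
    (B : LinearMap.BilinForm k V) (halt : B.IsAlt) (hnd : B.Nondegenerate)
    (Q : QuadraticForm k V) (A : Module.End k V)
    (hA : ∀ x y : V, Q (x + y) - Q x - Q y = B (A x) y)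
    (hnil : IsNilpotent A) :
    ∃ e : Basis (Hr r) k V,
      (∀ i j : Hr r, B (e i) (e j) = if i.1 + j.1 = 0 then 1 else 0) ∧
      (∀ i : Hr r, A (e i) ∈ Submodule.span k {v : V | ∃ j : Hr r, i.1 < j.1 ∧ e j = v}) ∧
      (∀ i : Hr r, 0 ≤ i.1 → Q (e i) = 0) :=
  aux_main k r V hdim B halt hnd Q A hA hnil
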